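/- In a quasitriangular Hopf algebra, (s⊗s)ρ = ρ, where ρ is the R-matrix and s the antipode. -/

import Mathlib

open scoped TensorProduct
open Coalgebra HopfAlgebra

set_option synthInstance.maxHeartbeats 1000000
set_option maxHeartbeats 3200000

section Aux

variable {k : Type*} [Field k] {A : Type*} [Ring A] [HopfAlgebra k A]

local notation "ε" => Coalgebra.counit (R := k) (A := A)
local notation "Δ" => Coalgebra.comul (R := k) (A := A)
local notation "𝒮" => HopfAlgebra.antipode (R := k) (A := A)

lemma qt_antipode_one : HopfAlgebra.antipode (R := k) (A := A) 1 = 1 := by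
  have h := HopfAlgebra.mul_antipode_rTensor_comul_apply (R := k) (A := A) (a := 1)
  rw [Bialgebra.comul_one, Bialgebra.counit_one, Algebra.TensorProduct.one_def] at h
  simpa using h

/-- `x ⊗ (y ⊗ z) ↦ ε x • (y ⊗ z)`, an algebra hom. -/
noncomputable def qtChi : A ⊗[k] (A ⊗[k] A) →ₐ[k] A ⊗[k] A :=
  (Algebra.TensorProduct.lid k (A ⊗[k] A)).toAlgHom.comp
    (Algebra.TensorProduct.map (Bialgebra.counitAlgHom k A) (AlgHom.id k (A ⊗[k] A)))

lemma qtChi_tmul (a : A) (t : A ⊗[k] A) : qtChi (a ⊗ₜ[k] t) = ε a • t := by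
  simp [qtChi]

lemma qtChi_assoc_comul (x y : A) :
    qtChi ((TensorProduct.assoc k A A A) ((Δ x) ⊗ₜ[k] y)) = x ⊗ₜ[k] y := by
  have key : ∀ t : A ⊗[k] A,
      qtChi ((TensorProduct.assoc k A A A) (t ⊗ₜ[k] y))
        = ((TensorProduct.lid k A) ((Coalgebra.counit (R := k)).rTensor A t)) ⊗ₜ[k] y := by
    intro t
    induction t using TensorProduct.induction_on with
    | zero =>
        rw [TensorProduct.zero_tmul, map_zero, map_zero, map_zero, map_zero,
          TensorProduct.zero_tmul]
    | tmul a b => simp [qtChi_tmul, TensorProduct.smul_tmul']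
    | add t₁ t₂ h1 h2 =>
        rw [TensorProduct.add_tmul, map_add, map_add, h1, h2, map_add, map_add,
          TensorProduct.add_tmul]
  rw [key, Coalgebra.rTensor_counit_comul]
  simp

/-- `x ⊗ (y ⊗ z) ↦ x ⊗ (ε z • y)`, an algebra hom. -/
noncomputable def qtChi' : A ⊗[k] (A ⊗[k] A) →ₐ[k] A ⊗[k] A :=
  Algebra.TensorProduct.map (AlgHom.id k A)
    ((Algebra.TensorProduct.rid k k A).toAlgHom.comp
      (Algebra.TensorProduct.map (AlgHom.id k A) (Bialgebra.counitAlgHom k A)))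

lemma qtChi'_tmul (x y z : A) : qtChi' (x ⊗ₜ[k] (y ⊗ₜ[k] z)) = x ⊗ₜ[k] (ε z • y) := by
  simp [qtChi']

lemma qtChi'_comul (x y : A) : qtChi' (x ⊗ₜ[k] (Δ y)) = x ⊗ₜ[k] y := by
  have key : ∀ t : A ⊗[k] A,
      qtChi' (x ⊗ₜ[k] t)
        = x ⊗ₜ[k] ((TensorProduct.rid k A) ((Coalgebra.counit (R := k)).lTensor A t)) := by
    intro t
    induction t using TensorProduct.induction_on with
    | zero => rw [TensorProduct.tmul_zero, map_zero, map_zero, map_zero, TensorProduct.tmul_zero]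
    | tmul a b => simp [qtChi'_tmul]
    | add t₁ t₂ h1 h2 =>
        rw [TensorProduct.tmul_add, map_add, h1, h2, map_add, map_add, TensorProduct.tmul_add]
  rw [key, Coalgebra.lTensor_counit_comul]
  simp

/-- `1 ⊗ Δ`, an algebra hom. -/
noncomputable def qtPsi : A ⊗[k] A →ₐ[k] A ⊗[k] (A ⊗[k] A) :=
  Algebra.TensorProduct.map (AlgHom.id k A) (Bialgebra.comulAlgHom k A)

lemma qtPsi_tmul (x y : A) : qtPsi (x ⊗ₜ[k] y) = x ⊗ₜ[k] (Δ y) := by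
  simp [qtPsi]

/-- `x ⊗ y ↦ x ⊗ (y ⊗ 1)`, an algebra hom. -/
noncomputable def qtIota12 : A ⊗[k] A →ₐ[k] A ⊗[k] (A ⊗[k] A) :=
  Algebra.TensorProduct.map (AlgHom.id k A) Algebra.TensorProduct.includeLeft

lemma qtIota12_tmul (x y : A) : qtIota12 (x ⊗ₜ[k] y) = x ⊗ₜ[k] (y ⊗ₜ[k] (1 : A)) := by
  simp [qtIota12]

/-- `x ⊗ y ↦ x ⊗ (1 ⊗ y)`, an algebra hom. -/
noncomputable def qtIota13 : A ⊗[k] A →ₐ[k] A ⊗[k] (A ⊗[k] A) :=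
  Algebra.TensorProduct.map (AlgHom.id k A) Algebra.TensorProduct.includeRight

lemma qtIota13_tmul (x y : A) : qtIota13 (x ⊗ₜ[k] y) = x ⊗ₜ[k] ((1 : A) ⊗ₜ[k] y) := by
  simp [qtIota13]

/-- `x ⊗ (y ⊗ z) ↦ (𝒮 x * y) ⊗ z`, a linear map. -/
noncomputable def qtF : A ⊗[k] (A ⊗[k] A) →ₗ[k] A ⊗[k] A :=
  (TensorProduct.map
      (LinearMap.mul' k A ∘ₗ ((HopfAlgebra.antipode (R := k) (A := A)).rTensor A))
      LinearMap.id) ∘ₗ (TensorProduct.assoc k A A A).symm.toLinearMap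

lemma qtF_tmul (x y z : A) : qtF (x ⊗ₜ[k] (y ⊗ₜ[k] z)) = (𝒮 x * y) ⊗ₜ[k] z := by
  simp [qtF]

lemma qtF_assoc_comul (x y : A) :
    qtF ((TensorProduct.assoc k A A A) ((Δ x) ⊗ₜ[k] y))
      = (algebraMap k A (ε x)) ⊗ₜ[k] y := by
  have : qtF ((TensorProduct.assoc k A A A) ((Δ x) ⊗ₜ[k] y))
      = (LinearMap.mul' k A (((HopfAlgebra.antipode (R := k) (A := A)).rTensor A) (Δ x)))
          ⊗ₜ[k] y := by
    simp only [qtF, LinearMap.comp_apply, LinearEquiv.coe_coe, LinearEquiv.symm_apply_apply,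
      TensorProduct.map_tmul, LinearMap.id_apply]
  rw [this, HopfAlgebra.mul_antipode_rTensor_comul_apply]

/-- `x ⊗ (y ⊗ z) ↦ x ⊗ (y * 𝒮 z)`, a linear map. -/
noncomputable def qtG : A ⊗[k] (A ⊗[k] A) →ₗ[k] A ⊗[k] A :=
  TensorProduct.map LinearMap.id
    (LinearMap.mul' k A ∘ₗ ((HopfAlgebra.antipode (R := k) (A := A)).lTensor A))

lemma qtG_tmul (x y z : A) : qtG (x ⊗ₜ[k] (y ⊗ₜ[k] z)) = x ⊗ₜ[k] (y * 𝒮 z) := by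
  simp [qtG]

lemma qtG_comul (x y : A) : qtG (x ⊗ₜ[k] (Δ y)) = x ⊗ₜ[k] (algebraMap k A (ε y)) := by
  have : qtG (x ⊗ₜ[k] (Δ y))
      = x ⊗ₜ[k] (LinearMap.mul' k A
          (((HopfAlgebra.antipode (R := k) (A := A)).lTensor A) (Δ y))) := by
    simp only [qtG, TensorProduct.map_tmul, LinearMap.id_apply, LinearMap.comp_apply]
  rw [this, HopfAlgebra.mul_antipode_lTensor_comul_apply]

/-- `x ⊗ y ↦ ε y • x`, a linear map. -/
noncomputable def qtW : A ⊗[k] A →ₗ[k] A :=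
  (TensorProduct.rid k A).toLinearMap ∘ₗ ((Coalgebra.counit (R := k) (A := A)).lTensor A)

lemma qtW_tmul (x y : A) : qtW (x ⊗ₜ[k] y) = ε y • x := by
  simp [qtW]

end Aux

/-- In a quasitriangular Hopf algebra, `(s ⊗ s)ρ = ρ`. -/
theorem antipode_tensor_antipode_rmatrix
    {k : Type*} [Field k] {A : Type*} [Ring A] [HopfAlgebra k A]
    {ι : Type*} [Fintype ι] (e e' : ι → A)
    (ρ : A ⊗[k] A) (hρ : ρ = ∑ j, e j ⊗ₜ[k] e' j)
    -- intertwining: ρ Δ(x) = Δᵒᵖ(x) ρ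
    (h1 : ∀ x : A, ρ * Coalgebra.comul x
        = (TensorProduct.comm k A A) (Coalgebra.comul x) * ρ)
    -- (1 ⊗ Δ)ρ = ρ₁₃ ρ₁₂
    (h2 : ∑ j, e j ⊗ₜ[k] (Coalgebra.comul (R := k) (e' j))
        = (∑ j, e j ⊗ₜ[k] ((1 : A) ⊗ₜ[k] e' j)) * (∑ j, e j ⊗ₜ[k] (e' j ⊗ₜ[k] (1 : A))))
    -- (Δ ⊗ 1)ρ = ρ₁₃ ρ₂₃
    (h3 : ∑ j, (TensorProduct.assoc k A A A) ((Coalgebra.comul (R := k) (e j)) ⊗ₜ[k] e' j)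
        = (∑ j, e j ⊗ₜ[k] ((1 : A) ⊗ₜ[k] e' j)) * (∑ j, (1 : A) ⊗ₜ[k] (e j ⊗ₜ[k] e' j)))
    (hρinv : IsUnit ρ) :
    TensorProduct.map (HopfAlgebra.antipode (R := k)) (HopfAlgebra.antipode (R := k)) ρ = ρ := by
  classical
  set S : A →ₗ[k] A := HopfAlgebra.antipode (R := k) with hS
  set L : A ⊗[k] A := ∑ j, S (e j) ⊗ₜ[k] e' j with hL
  set u : A := ∑ j, Coalgebra.counit (R := k) (e j) • e' j with hu
  set v : A := ∑ j, Coalgebra.counit (R := k) (e' j) • e j with hv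
  -- Step E1 : L * ρ = 1 ⊗ u
  have hE1 : L * ρ = (1 : A) ⊗ₜ[k] u := by
    have hLHS : qtF (∑ j, (TensorProduct.assoc k A A A)
        ((Coalgebra.comul (R := k) (e j)) ⊗ₜ[k] e' j)) = (1 : A) ⊗ₜ[k] u := by
      rw [map_sum]
      have step : ∀ j, qtF ((TensorProduct.assoc k A A A)
          ((Coalgebra.comul (R := k) (e j)) ⊗ₜ[k] e' j))
          = (1 : A) ⊗ₜ[k] (Coalgebra.counit (R := k) (e j) • e' j) := by
        intro j
        rw [qtF_assoc_comul, Algebra.algebraMap_eq_smul_one, TensorProduct.smul_tmul]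
      rw [Finset.sum_congr rfl (fun j _ => step j), ← TensorProduct.tmul_sum]
    have hRHS : qtF ((∑ j, e j ⊗ₜ[k] ((1 : A) ⊗ₜ[k] e' j))
        * (∑ j, (1 : A) ⊗ₜ[k] (e j ⊗ₜ[k] e' j))) = L * ρ := by
      rw [hρ, hL, Finset.sum_mul_sum, Finset.sum_mul_sum, map_sum]
      simp only [map_sum, Algebra.TensorProduct.tmul_mul_tmul, one_mul, mul_one, qtF_tmul]
      rfl
    rw [← hRHS, ← h3, hLHS]
  -- ρ = (1 ⊗ u) * ρ
  have hρu : ρ = ((1 : A) ⊗ₜ[k] u) * ρ := by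
    have hLHS : qtChi (∑ j, (TensorProduct.assoc k A A A)
        ((Coalgebra.comul (R := k) (e j)) ⊗ₜ[k] e' j)) = ρ := by
      rw [map_sum]
      rw [Finset.sum_congr rfl (fun j _ => qtChi_assoc_comul (e j) (e' j)), ← hρ]
    have hRHS : qtChi ((∑ j, e j ⊗ₜ[k] ((1 : A) ⊗ₜ[k] e' j))
        * (∑ j, (1 : A) ⊗ₜ[k] (e j ⊗ₜ[k] e' j))) = ((1 : A) ⊗ₜ[k] u) * ρ := by
      rw [map_mul, map_sum, map_sum]
      congr 1
      · rw [Finset.sum_congr rfl (fun j _ => qtChi_tmul (e j) ((1 : A) ⊗ₜ[k] e' j))]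
        rw [hu, TensorProduct.tmul_sum]
        exact Finset.sum_congr rfl (fun j _ => by rw [TensorProduct.tmul_smul])
      · rw [Finset.sum_congr rfl (fun j _ => qtChi_tmul 1 (e j ⊗ₜ[k] e' j))]
        simp only [Bialgebra.counit_one, one_smul, ← hρ]
    conv_lhs => rw [← hLHS, h3, hRHS]
  obtain ⟨ν, hν⟩ := hρinv
  have hcancel : ∀ x y : A ⊗[k] A, x * ρ = y * ρ → x = y := by
    intro x y hxy
    have h' : x * (ρ * ↑ν⁻¹) = y * (ρ * ↑ν⁻¹) := by
      rw [← mul_assoc, hxy, mul_assoc]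
    rwa [← hν, Units.mul_inv, mul_one, mul_one] at h'
  have hu1 : (1 : A) ⊗ₜ[k] u = 1 :=
    hcancel _ _ (by rw [one_mul]; exact hρu.symm)
  have hLρ : L * ρ = 1 := hE1.trans hu1
  have hρL : ρ * L = 1 := by
    calc ρ * L = ρ * L * (ρ * ↑ν⁻¹) := by rw [← hν, Units.mul_inv, mul_one]
      _ = ρ * (L * ρ) * ↑ν⁻¹ := by simp only [mul_assoc]
      _ = ρ * ↑ν⁻¹ := by rw [hLρ, mul_one]
      _ = 1 := by rw [← hν, Units.mul_inv]
  -- chi' on h2 : ρ = (v ⊗ 1) * ρ, hence v = 1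
  have hρv : ρ = (v ⊗ₜ[k] (1 : A)) * ρ := by
    have hLHS : qtChi' (∑ j, e j ⊗ₜ[k] (Coalgebra.comul (R := k) (e' j))) = ρ := by
      rw [map_sum, Finset.sum_congr rfl (fun j _ => qtChi'_comul (e j) (e' j)), ← hρ]
    have hRHS : qtChi' ((∑ j, e j ⊗ₜ[k] ((1 : A) ⊗ₜ[k] e' j))
        * (∑ j, e j ⊗ₜ[k] (e' j ⊗ₜ[k] (1 : A)))) = (v ⊗ₜ[k] (1 : A)) * ρ := by
      rw [map_mul, map_sum, map_sum]
      congr 1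
      · rw [Finset.sum_congr rfl (fun j _ => qtChi'_tmul (e j) 1 (e' j))]
        rw [hv, TensorProduct.sum_tmul]
        exact Finset.sum_congr rfl
          (fun j _ => by rw [TensorProduct.tmul_smul, TensorProduct.smul_tmul'])
      · rw [Finset.sum_congr rfl (fun j _ => qtChi'_tmul (e j) (e' j) 1)]
        simp only [Bialgebra.counit_one, one_smul, ← hρ]
    conv_lhs => rw [← hLHS, h2, hRHS]
  have hv1 : v = 1 := by
    have h10 : v ⊗ₜ[k] (1 : A) = 1 :=
      hcancel _ _ (by rw [one_mul]; exact hρv.symm)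
    have := congrArg qtW h10
    rw [qtW_tmul, Bialgebra.counit_one, one_smul, Algebra.TensorProduct.one_def,
      qtW_tmul, Bialgebra.counit_one, one_smul] at this
    exact this
  -- psi computations
  have hψρ : qtPsi ρ = (∑ j, e j ⊗ₜ[k] ((1 : A) ⊗ₜ[k] e' j))
      * (∑ j, e j ⊗ₜ[k] (e' j ⊗ₜ[k] (1 : A))) := by
    rw [hρ, map_sum, Finset.sum_congr rfl (fun j _ => qtPsi_tmul (e j) (e' j)), h2]
  have hι12ρ : qtIota12 ρ = ∑ j, e j ⊗ₜ[k] (e' j ⊗ₜ[k] (1 : A)) := by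
    rw [hρ, map_sum, Finset.sum_congr rfl (fun j _ => qtIota12_tmul (e j) (e' j))]
  have hι13ρ : qtIota13 ρ = ∑ j, e j ⊗ₜ[k] ((1 : A) ⊗ₜ[k] e' j) := by
    rw [hρ, map_sum, Finset.sum_congr rfl (fun j _ => qtIota13_tmul (e j) (e' j))]
  have hE2 : qtPsi L = qtIota12 L * qtIota13 L := by
    have ha : qtPsi L * qtPsi ρ = 1 := by rw [← map_mul, hLρ, map_one]
    have hb : qtPsi ρ * (qtIota12 L * qtIota13 L) = 1 := by
      rw [hψρ]
      calc (∑ j, e j ⊗ₜ[k] ((1 : A) ⊗ₜ[k] e' j)) * (∑ j, e j ⊗ₜ[k] (e' j ⊗ₜ[k] (1 : A)))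
            * (qtIota12 L * qtIota13 L)
          = (∑ j, e j ⊗ₜ[k] ((1 : A) ⊗ₜ[k] e' j))
            * ((∑ j, e j ⊗ₜ[k] (e' j ⊗ₜ[k] (1 : A))) * qtIota12 L) * qtIota13 L := by
            simp only [mul_assoc]
        _ = (∑ j, e j ⊗ₜ[k] ((1 : A) ⊗ₜ[k] e' j)) * qtIota13 L := by
            rw [← hι12ρ, ← map_mul, hρL, map_one, mul_one]
        _ = 1 := by rw [← hι13ρ, ← map_mul, hρL, map_one]
    calc qtPsi L = qtPsi L * (qtPsi ρ * (qtIota12 L * qtIota13 L)) := by rw [hb, mul_one]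
      _ = (qtPsi L * qtPsi ρ) * (qtIota12 L * qtIota13 L) := by rw [mul_assoc]
      _ = qtIota12 L * qtIota13 L := by rw [ha, one_mul]
  -- apply qtG to hE2
  have hgL : qtG (qtPsi L) = 1 := by
    rw [hL, map_sum, map_sum]
    have step : ∀ j, qtG (qtPsi (S (e j) ⊗ₜ[k] e' j))
        = (Coalgebra.counit (R := k) (e' j) • S (e j)) ⊗ₜ[k] (1 : A) := by
      intro j
      rw [qtPsi_tmul, qtG_comul, Algebra.algebraMap_eq_smul_one, TensorProduct.tmul_smul,
        TensorProduct.smul_tmul']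
    rw [Finset.sum_congr rfl (fun j _ => step j), ← TensorProduct.sum_tmul]
    have : (∑ j, Coalgebra.counit (R := k) (e' j) • S (e j)) = S v := by
      rw [hv, map_sum]
      exact Finset.sum_congr rfl (fun j _ => (map_smul S _ _).symm)
    rw [this, hv1, hS, qt_antipode_one, Algebra.TensorProduct.one_def]
  have hgR : qtG (qtIota12 L * qtIota13 L) = L * (TensorProduct.map S S ρ) := by
    simp only [hL, hρ, map_sum, qtIota12_tmul, qtIota13_tmul, TensorProduct.map_tmul,
      Finset.sum_mul_sum, Algebra.TensorProduct.tmul_mul_tmul, one_mul, mul_one, qtG_tmul]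
    rfl
  have hfinal : L * (TensorProduct.map S S ρ) = 1 := by
    rw [← hgR, ← hE2, hgL]
  calc TensorProduct.map S S ρ = 1 * TensorProduct.map S S ρ := by rw [one_mul]
    _ = (ρ * L) * TensorProduct.map S S ρ := by rw [hρL]
    _ = ρ * (L * TensorProduct.map S S ρ) := by rw [mul_assoc]
    _ = ρ := by rw [hfinal, mul_one]
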